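/- The closed-form stationary distribution of the joint (source state, Version Innovation Age) chain under the randomized stationary policy is a probability distribution: the family i ↦ π₀(i) + π₁(i) is summable and ∑_{i≥0} (π₀(i) + π₁(i)) = 1. -/

import Mathlib

set_option maxHeartbeats 1000000 in
/-- The stationary distribution of the joint (source state, Version Innovation Age)
chain under the randomized stationary policy is a probability distribution. -/
theorem via_stationary_is_prob (p q a : ℝ)
    (hp : 0 < p) (hp1 : p < 1) (hq : 0 < q) (hq1 : q < 1)
    (ha : 0 < a) (ha1 : a ≤ 1)
    (Φ : ℝ → ℝ) (hΦ : ∀ x, Φ x = x + (1 - x) * a)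
    (k w : ℕ → ℕ)
    (hk : ∀ i, k i = if Even i then i / 2 else (i + 1) / 2)
    (hw : ∀ i, w i = if Even i then (i + 2) / 2 else (i + 1) / 2)
    (π₀ π₁ : ℕ → ℝ)
    (hπ₀ : ∀ i, π₀ i = p ^ k i * q ^ w i * a * (1 - a) ^ i /
      ((p + q) * Φ p ^ w i * Φ q ^ k i))
    (hπ₁ : ∀ i, π₁ i = p ^ w i * q ^ k i * a * (1 - a) ^ i /
      ((p + q) * Φ p ^ k i * Φ q ^ w i)) :
    Summable (fun i : ℕ => π₀ i + π₁ i) ∧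
    ∑' i : ℕ, (π₀ i + π₁ i) = 1 := by
  have hΦp : Φ p = p + (1 - p) * a := hΦ p
  have hΦq : Φ q = q + (1 - q) * a := hΦ q
  have hΦp0 : 0 < Φ p := by rw [hΦp]; nlinarith
  have hΦq0 : 0 < Φ q := by rw [hΦq]; nlinarith
  have hpq : 0 < p + q := by linarith
  have h1a : 0 ≤ 1 - a := by linarith
  set r : ℝ := p * q * (1 - a) ^ 2 / (Φ p * Φ q) with hr
  have hΦΦ : 0 < Φ p * Φ q := mul_pos hΦp0 hΦq0
  have hr0 : 0 ≤ r := by positivity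
  have hr1 : r < 1 := by
    rw [hr, div_lt_one hΦΦ, hΦp, hΦq]
    nlinarith [mul_pos hp hq, mul_nonneg (mul_pos ha hpq).le h1a, sq_nonneg a,
      mul_pos ha hpq]
  -- values of k, w at even/odd indices
  have hke : ∀ m : ℕ, k (2 * m) = m := fun m => by
    rw [hk]; rw [if_pos (even_two_mul m)]; omega
  have hwe : ∀ m : ℕ, w (2 * m) = m + 1 := fun m => by
    rw [hw]; rw [if_pos (even_two_mul m)]; omega
  have hodd : ∀ m : ℕ, ¬ Even (2 * m + 1) := fun m => by
    simp [Nat.even_add_one, even_two_mul m]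
  have hko : ∀ m : ℕ, k (2 * m + 1) = m + 1 := fun m => by
    rw [hk]; rw [if_neg (hodd m)]; omega
  have hwo : ∀ m : ℕ, w (2 * m + 1) = m + 1 := fun m => by
    rw [hw]; rw [if_neg (hodd m)]; omega
  set Ce : ℝ := a * q / ((p + q) * Φ p) + a * p / ((p + q) * Φ q) with hCe
  set Co : ℝ := 2 * (a * p * q * (1 - a)) / ((p + q) * (Φ p * Φ q)) with hCo
  have key_e : ∀ m : ℕ, π₀ (2 * m) + π₁ (2 * m) = Ce * r ^ m := by
    intro m
    rw [hπ₀, hπ₁, hke, hwe, hCe, hr, div_pow, mul_pow, mul_pow, pow_mul]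
    field_simp
    ring
  have key_o : ∀ m : ℕ, π₀ (2 * m + 1) + π₁ (2 * m + 1) = Co * r ^ m := by
    intro m
    rw [hπ₀, hπ₁, hko, hwo, hCo, hr, div_pow, mul_pow, mul_pow]
    have : (1 - a) ^ (2 * m + 1) = ((1 - a) ^ 2) ^ m * (1 - a) := by
      rw [pow_succ, pow_mul]
    rw [this]
    field_simp
    ring
  have hsum_e : Summable fun m : ℕ => Ce * r ^ m :=
    (summable_geometric_of_lt_one hr0 hr1).mul_left Ce
  have hsum_o : Summable fun m : ℕ => Co * r ^ m :=
    (summable_geometric_of_lt_one hr0 hr1).mul_left Co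
  have hSe : Summable fun m : ℕ => π₀ (2 * m) + π₁ (2 * m) := by
    simpa only [key_e] using hsum_e
  have hSo : Summable fun m : ℕ => π₀ (2 * m + 1) + π₁ (2 * m + 1) := by
    simpa only [key_o] using hsum_o
  have hS : Summable (fun i : ℕ => π₀ i + π₁ i) :=
    Summable.even_add_odd (f := fun i : ℕ => π₀ i + π₁ i) hSe hSo
  refine ⟨hS, ?_⟩
  have htsum := tsum_even_add_odd (f := fun i : ℕ => π₀ i + π₁ i) hSe hSo
  rw [← htsum]
  have h1 : ∑' m : ℕ, (π₀ (2 * m) + π₁ (2 * m)) = Ce * (1 - r)⁻¹ := by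
    simp only [key_e]
    rw [tsum_mul_left, tsum_geometric_of_lt_one hr0 hr1]
  have h2 : ∑' m : ℕ, (π₀ (2 * m + 1) + π₁ (2 * m + 1)) = Co * (1 - r)⁻¹ := by
    simp only [key_o]
    rw [tsum_mul_left, tsum_geometric_of_lt_one hr0 hr1]
  rw [h1, h2]
  have hr1' : 0 < 1 - r := by linarith
  have hident : Ce + Co = 1 - r := by
    have hA : p + (1 - p) * a ≠ 0 := by nlinarith
    have hB : q + (1 - q) * a ≠ 0 := by nlinarith
    rw [hCe, hCo, hr, hΦp, hΦq]
    rw [div_add_div _ _ (by positivity) (by positivity), div_add_div _ _ (by positivity) (by positivity), eq_sub_iff_add_eq, div_add_div _ _ (by positivity) (by positivity), div_eq_one_iff_eq (by positivity)]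
    ring
  calc Ce * (1 - r)⁻¹ + Co * (1 - r)⁻¹ = (Ce + Co) * (1 - r)⁻¹ := by ring
    _ = (1 - r) * (1 - r)⁻¹ := by rw [hident]
    _ = 1 := mul_inv_cancel₀ hr1'.ne'
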